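/- D_2^2(K_{4,3,2}) = 3; that is: (i) every 2-coloring of the edges of the complete tripartite graph K_{4,3,2} admits two monochromatic subgraphs, each of diameter at most 3, whose vertex sets cover all vertices, and (ii) there exists a 2-coloring of the edges of K_{4,3,2} such that no two monochromatic subgraphs, each of diameter at most 2, have vertex sets covering all vertices. -/

import Mathlib

open SimpleGraph

/-- The spanning subgraph of `G` consisting of the edges that receive color `b`
under the edge-coloring `c`. -/
def SimpleGraph.colorSubgraph {V : Type*} (G : SimpleGraph V) (c : Sym2 V → Bool) (b : Bool) :
    SimpleGraph V where
  Adj u v := G.Adj u v ∧ c s(u, v) = b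
  symm := ⟨fun u v h => ⟨h.1.symm, by rw [Sym2.eq_swap]; exact h.2⟩⟩
  loopless := ⟨fun u h => h.1.ne rfl⟩

/-- There are two monochromatic connected subgraphs, each of diameter at most `d`,
whose vertex sets together cover all of `V`. -/
def HasMonoCover {V : Type*} (G : SimpleGraph V) (c : Sym2 V → Bool) (d : ℕ) : Prop :=
  ∃ (S₁ S₂ : Set V) (b₁ b₂ : Bool),
    (SimpleGraph.induce S₁ (G.colorSubgraph c b₁)).Connected ∧
    (SimpleGraph.induce S₁ (G.colorSubgraph c b₁)).ediam ≤ (d : ℕ∞) ∧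
    (SimpleGraph.induce S₂ (G.colorSubgraph c b₂)).Connected ∧
    (SimpleGraph.induce S₂ (G.colorSubgraph c b₂)).ediam ≤ (d : ℕ∞) ∧
    S₁ ∪ S₂ = Set.univ

lemma hub {W : Type*} [Nonempty W] (H : SimpleGraph W) (u s : W)
    (h1 : ∀ x : W, x ≠ u → x ≠ s → H.Adj u x)
    (h2 : s = u ∨ H.Adj u s ∨ ∃ y, H.Adj u y ∧ H.Adj y s) :
    H.Connected ∧ H.ediam ≤ 3 := by
  have key : ∀ x : W, H.edist u x ≤ 2 ∧ (x ≠ s → H.edist u x ≤ 1) := by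
    intro x
    by_cases hxu : x = u
    · subst hxu; simp [edist_self]
    by_cases hxs : x = s
    · subst hxs
      refine ⟨?_, fun h => absurd rfl h⟩
      rcases h2 with rfl | h | ⟨y, hy1, hy2⟩
      · simp [edist_self]
      · have := H.edist_le (h.toWalk)
        simp at this
        exact this.trans (by norm_num)
      · have := H.edist_le ((Walk.cons hy1 (Walk.cons hy2 Walk.nil)))
        simpa using this
    · have h := H.edist_le ((h1 x hxu hxs).toWalk)
      simp at h
      exact ⟨h.trans (by norm_num), fun _ => h⟩
  have reach : ∀ x, H.Reachable u x := by
    intro x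
    apply reachable_of_edist_ne_top
    exact fun ht => by simp [ht] at key; exact absurd (key x).1 (by simp [ht])
  constructor
  · exact ⟨fun x y => (reach x).symm.trans (reach y)⟩
  · rw [ediam_le_iff]
    intro x y
    by_cases hx : x = s
    · by_cases hy : y = s
      · subst hx; subst hy; simp [edist_self]
      · calc H.edist x y ≤ H.edist x u + H.edist u y := H.edist_triangle
          _ ≤ 2 + 1 := by
              rw [edist_comm]
              exact add_le_add (key x).1 ((key y).2 hy)
          _ ≤ 3 := by norm_num
    · calc H.edist x y ≤ H.edist x u + H.edist u y := H.edist_triangle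
        _ ≤ 1 + 2 := by
            rw [edist_comm]
            exact add_le_add ((key x).2 hx) (key y).1
        _ ≤ 3 := by norm_num

lemma hub_induce {W : Type*} (H : SimpleGraph W) (S : Set W) (u s : W) (hu : u ∈ S) (hs : s ∈ S)
    (h1 : ∀ x ∈ S, x ≠ u → x ≠ s → H.Adj u x)
    (h2 : s = u ∨ H.Adj u s ∨ ∃ y ∈ S, H.Adj u y ∧ H.Adj y s) :
    (SimpleGraph.induce S H).Connected ∧ (SimpleGraph.induce S H).ediam ≤ 3 := by
  haveI : Nonempty S := ⟨⟨u, hu⟩⟩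
  apply hub _ (⟨u, hu⟩ : S) ⟨s, hs⟩
  · rintro ⟨x, hx⟩ hxu hxs
    exact h1 x hx (fun h => hxu (Subtype.ext h)) (fun h => hxs (Subtype.ext h))
  · rcases h2 with rfl | h | ⟨y, hy, hy1, hy2⟩
    · exact Or.inl rfl
    · exact Or.inr (Or.inl h)
    · exact Or.inr (Or.inr ⟨⟨y, hy⟩, hy1, hy2⟩)

abbrev Vt := (Σ i : Fin 3, Fin (![4, 3, 2] i))
abbrev Gt : SimpleGraph Vt := completeMultipartiteGraph (fun i : Fin 3 => Fin (![4, 3, 2] i))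

def uu : Vt := ⟨2, ⟨0, by decide⟩⟩
def vv : Vt := ⟨2, ⟨1, by decide⟩⟩

lemma two_cases : ∀ x : Vt, x.1 = 2 → x = uu ∨ x = vv := by decide
lemma other_part : ∀ p : Fin 3, p ≠ 2 → ∃ z : Vt, z.1 ≠ 2 ∧ z.1 ≠ p := by decide
lemma bool_cases : ∀ a b : Bool, a = b ∨ a = !b := by decide

lemma part1 (col : Sym2 Vt → Bool) : HasMonoCover Gt col 3 := by
  classical
  by_cases hc : ∃ w : Vt, w.1 ≠ 2 ∧ col s(uu, w) = col s(vv, w)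
  · -- Case 1
    obtain ⟨w, hw2, hweq⟩ := hc
    set b := col s(uu, w) with hb
    have hvw : col s(w, vv) = b := by rw [Sym2.eq_swap]; exact hweq.symm
    refine ⟨{uu, vv} ∪ {x | x.1 ≠ 2 ∧ col s(uu, x) = b},
            {uu} ∪ {x | x.1 ≠ 2 ∧ col s(uu, x) = !b}, b, !b, ?_⟩
    have c1 := hub_induce (Gt.colorSubgraph col b)
      ({uu, vv} ∪ {x | x.1 ≠ 2 ∧ col s(uu, x) = b}) uu vv
      (Set.mem_union_left _ (Set.mem_insert _ _))
      (Set.mem_union_left _ (Set.mem_insert_of_mem _ rfl))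
      (by
        intro x hx hxu hxv
        simp only [Set.mem_union, Set.mem_insert_iff, Set.mem_singleton_iff, Set.mem_setOf_eq] at hx
        rcases hx with (hx | hx) | ⟨hx2, hxc⟩
        · exact absurd hx hxu
        · exact absurd hx hxv
        · exact ⟨fun h => hx2 h.symm, hxc⟩)
      (by
        refine Or.inr (Or.inr ⟨w, Set.mem_union_right _ ⟨hw2, rfl⟩, ⟨fun h => hw2 h.symm, rfl⟩,
          ⟨hw2, hvw⟩⟩))
    have c2 := hub_induce (Gt.colorSubgraph col (!b))
      ({uu} ∪ {x | x.1 ≠ 2 ∧ col s(uu, x) = !b}) uu uu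
      (Set.mem_union_left _ rfl) (Set.mem_union_left _ rfl)
      (by
        intro x hx hxu _
        simp only [Set.mem_union, Set.mem_insert_iff, Set.mem_singleton_iff, Set.mem_setOf_eq] at hx
        rcases hx with hx | ⟨hx2, hxc⟩
        · exact absurd hx hxu
        · exact ⟨fun h => hx2 h.symm, hxc⟩)
      (Or.inl rfl)
    refine ⟨c1.1, c1.2, c2.1, c2.2, ?_⟩
    ext x
    simp only [Set.mem_union, Set.mem_insert_iff, Set.mem_singleton_iff, Set.mem_setOf_eq,
      Set.mem_univ, iff_true]
    by_cases hx2 : x.1 = 2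
    · rcases two_cases x hx2 with rfl | rfl <;> tauto
    · rcases bool_cases (col s(uu, x)) b with h | h <;> tauto
  · -- Case 2
    push_neg at hc
    have hvw : ∀ w : Vt, w.1 ≠ 2 → col s(vv, w) = !(col s(uu, w)) := by
      intro w h
      have := hc w h
      revert this
      cases col s(uu, w) <;> cases col s(vv, w) <;> simp
    by_cases hA : ∃ b : Bool, ∀ w : Vt, w.1 ≠ 2 → col s(uu, w) = b
    · -- Case 2a
      obtain ⟨b, hb⟩ := hA
      refine ⟨{uu} ∪ {x | x.1 ≠ 2}, {vv} ∪ {x | x.1 ≠ 2}, b, !b, ?_⟩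
      have c1 := hub_induce (Gt.colorSubgraph col b)
        ({uu} ∪ {x | x.1 ≠ 2}) uu uu
        (Set.mem_union_left _ rfl) (Set.mem_union_left _ rfl)
        (by
          intro x hx hxu _
          simp only [Set.mem_union, Set.mem_insert_iff, Set.mem_singleton_iff, Set.mem_setOf_eq] at hx
          rcases hx with hx | hx2
          · exact absurd hx hxu
          · exact ⟨fun h => hx2 h.symm, hb x hx2⟩)
        (Or.inl rfl)
      have c2 := hub_induce (Gt.colorSubgraph col (!b))
        ({vv} ∪ {x | x.1 ≠ 2}) vv vv
        (Set.mem_union_left _ rfl) (Set.mem_union_left _ rfl)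
        (by
          intro x hx hxu _
          simp only [Set.mem_union, Set.mem_insert_iff, Set.mem_singleton_iff, Set.mem_setOf_eq] at hx
          rcases hx with hx | hx2
          · exact absurd hx hxu
          · refine ⟨fun h => hx2 h.symm, ?_⟩
            rw [hvw x hx2, hb x hx2])
        (Or.inl rfl)
      refine ⟨c1.1, c1.2, c2.1, c2.2, ?_⟩
      ext x
      simp only [Set.mem_union, Set.mem_insert_iff, Set.mem_singleton_iff, Set.mem_setOf_eq,
        Set.mem_univ, iff_true]
      by_cases hx2 : x.1 = 2
      · rcases two_cases x hx2 with rfl | rfl <;> tauto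
      · tauto
    · push_neg at hA
      by_cases hcross : ∃ (b : Bool) (w₁ w₂ : Vt), w₁.1 ≠ 2 ∧ w₂.1 ≠ 2 ∧ w₁.1 ≠ w₂.1 ∧
          col s(uu, w₁) = b ∧ col s(uu, w₂) = !b ∧ col s(w₁, w₂) = b
      · -- Case 2c
        obtain ⟨b, w₁, w₂, hw₁2, hw₂2, hne, hc1, hc2, hce⟩ := hcross
        refine ⟨{uu, w₂} ∪ {x | x.1 ≠ 2 ∧ col s(uu, x) = b},
                {vv} ∪ {x | x.1 ≠ 2 ∧ col s(uu, x) = !b}, b, b, ?_⟩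
        have c1 := hub_induce (Gt.colorSubgraph col b)
          ({uu, w₂} ∪ {x | x.1 ≠ 2 ∧ col s(uu, x) = b}) uu w₂
          (Set.mem_union_left _ (Set.mem_insert _ _))
          (Set.mem_union_left _ (Set.mem_insert_of_mem _ rfl))
          (by
            intro x hx hxu hxw
            simp only [Set.mem_union, Set.mem_insert_iff, Set.mem_singleton_iff, Set.mem_setOf_eq] at hx
            rcases hx with (hx | hx) | ⟨hx2, hxc⟩
            · exact absurd hx hxu
            · exact absurd hx hxw
            · exact ⟨fun h => hx2 h.symm, hxc⟩)
          (by
            refine Or.inr (Or.inr ⟨w₁, Set.mem_union_right _ ⟨hw₁2, hc1⟩,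
              ⟨fun h => hw₁2 h.symm, hc1⟩, ⟨hne, hce⟩⟩))
        have c2 := hub_induce (Gt.colorSubgraph col b)
          ({vv} ∪ {x | x.1 ≠ 2 ∧ col s(uu, x) = !b}) vv vv
          (Set.mem_union_left _ rfl) (Set.mem_union_left _ rfl)
          (by
            intro x hx hxu _
            simp only [Set.mem_union, Set.mem_insert_iff, Set.mem_singleton_iff, Set.mem_setOf_eq] at hx
            rcases hx with hx | ⟨hx2, hxc⟩
            · exact absurd hx hxu
            · refine ⟨fun h => hx2 h.symm, ?_⟩
              rw [hvw x hx2, hxc]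
              simp)
          (Or.inl rfl)
        refine ⟨c1.1, c1.2, c2.1, c2.2, ?_⟩
        ext x
        simp only [Set.mem_union, Set.mem_insert_iff, Set.mem_singleton_iff, Set.mem_setOf_eq,
          Set.mem_univ, iff_true]
        by_cases hx2 : x.1 = 2
        · rcases two_cases x hx2 with rfl | rfl <;> tauto
        · rcases bool_cases (col s(uu, x)) b with h | h <;> tauto
      · -- Case 2d : contradiction
        exfalso
        have cross : ∀ w₁ w₂ : Vt, w₁.1 ≠ 2 → w₂.1 ≠ 2 → w₁.1 ≠ w₂.1 →
            col s(uu, w₁) = true → col s(uu, w₂) = false → False := by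
          intro w₁ w₂ h1 h2 hne hcc1 hcc2
          apply hcross
          cases he : col s(w₁, w₂)
          · exact ⟨false, w₂, w₁, h2, h1, hne.symm, hcc2, by simp [hcc1],
              by rw [Sym2.eq_swap]; exact he⟩
          · exact ⟨true, w₁, w₂, h1, h2, hne, hcc1, by simp [hcc2], he⟩
        obtain ⟨wt, hwt2, hwtc⟩ := hA false
        obtain ⟨wf, hwf2, hwfc⟩ := hA true
        replace hwtc : col s(uu, wt) = true := by revert hwtc; cases col s(uu, wt) <;> simp
        replace hwfc : col s(uu, wf) = false := by revert hwfc; cases col s(uu, wf) <;> simp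
        have hp : wt.1 = wf.1 := by
          by_contra hne
          exact cross wt wf hwt2 hwf2 hne hwtc hwfc
        obtain ⟨z, hz2, hzp⟩ := other_part wt.1 hwt2
        cases hcz : col s(uu, z)
        · exact cross wt z hwt2 hz2 (fun h => hzp h.symm) hwtc hcz
        · exact cross z wf hz2 hwf2 (fun h => hzp (h.trans hp.symm)) hcz hwfc

def tbl : Fin 9 → Fin 9 → Bool := fun i j =>
  ![![false,false,false,false,true ,false,false,true ,false],
    ![false,false,false,false,false,false,true ,false,true ],
    ![false,false,false,false,true ,false,true ,true ,true ],
    ![false,false,false,false,true ,true ,false,false,true ],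
    ![true ,false,true ,true ,false,false,false,true ,false],
    ![false,false,false,true ,false,false,false,false,false],
    ![false,true ,true ,false,false,false,false,true ,false],
    ![true ,false,true ,false,true ,false,true ,false,false],
    ![false,true ,true ,true ,false,false,false,false,false]] i j

def enc (x : Vt) : Fin 9 :=
  ⟨![0, 4, 7] x.1 + x.2.1, by
    rcases x with ⟨i, j⟩
    fin_cases i <;> · have := j.2; revert this; simp [Matrix.cons_val_zero, Matrix.cons_val_one]; omega⟩

lemma tbl_symm : ∀ x y : Vt, tbl (enc x) (enc y) = tbl (enc y) (enc x) := by decide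

def col2 : Sym2 Vt → Bool := Sym2.lift ⟨fun x y => tbl (enc x) (enc y), tbl_symm⟩

lemma col2_mk (x y : Vt) : col2 s(x, y) = tbl (enc x) (enc y) := rfl

def Pb (m : Vt → Bool) (b : Bool) (x y : Vt) : Prop :=
  x = y ∨ (x.1 ≠ y.1 ∧ tbl (enc x) (enc y) = b) ∨
    ∃ z : Vt, m z = true ∧ (x.1 ≠ z.1 ∧ tbl (enc x) (enc z) = b) ∧
      (z.1 ≠ y.1 ∧ tbl (enc z) (enc y) = b)

instance (m : Vt → Bool) (b : Bool) (x y : Vt) : Decidable (Pb m b x y) := by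
  unfold Pb; infer_instance

def Qb (m : Vt → Bool) (b : Bool) : Prop :=
  ∀ x y, m x = true → m y = true → Pb m b x y

instance (m : Vt → Bool) (b : Bool) : Decidable (Qb m b) := by
  unfold Qb; infer_instance

lemma walk_short {W : Type*} {H : SimpleGraph W} {x y : W} (p : H.Walk x y) (h : p.length ≤ 2) :
    x = y ∨ H.Adj x y ∨ ∃ z, H.Adj x z ∧ H.Adj z y := by
  match p with
  | Walk.nil => exact Or.inl rfl
  | Walk.cons h' Walk.nil => exact Or.inr (Or.inl h')
  | Walk.cons h' (Walk.cons h'' Walk.nil) => exact Or.inr (Or.inr ⟨_, h', h''⟩)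
  | Walk.cons _ (Walk.cons _ (Walk.cons _ q)) =>
    exfalso
    simp only [Walk.length_cons] at h
    omega

lemma bridge (S : Set Vt) [DecidablePred (· ∈ S)] (b : Bool)
    (hc : (SimpleGraph.induce S (Gt.colorSubgraph col2 b)).Connected)
    (hd : (SimpleGraph.induce S (Gt.colorSubgraph col2 b)).ediam ≤ 2) :
    Qb (fun v => decide (v ∈ S)) b := by
  intro x y hx hy
  rw [decide_eq_true_eq] at hx hy
  have hr := hc ⟨x, hx⟩ ⟨y, hy⟩
  obtain ⟨p, hp⟩ := hr.exists_walk_length_eq_edist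
  have hlen : p.length ≤ 2 := by
    have he := (edist_le_ediam (G := SimpleGraph.induce S (Gt.colorSubgraph col2 b))
      (u := ⟨x, hx⟩) (v := ⟨y, hy⟩)).trans hd
    rw [← hp] at he
    exact_mod_cast he
  rcases walk_short p hlen with h | h | ⟨z, hz1, hz2⟩
  · exact Or.inl (congrArg Subtype.val h)
  · exact Or.inr (Or.inl ⟨h.1, h.2⟩)
  · exact Or.inr (Or.inr ⟨z.1, decide_eq_true z.2, ⟨hz1.1, hz1.2⟩, ⟨hz2.1, hz2.2⟩⟩)

def tblG : Fin 18 → Fin 9 → Bool :=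
  fun k v =>
  ![![true ,false,true ,true ,true ,false,false,true ,false],
    ![true ,true ,true ,false,false,true ,false,true ,false],
    ![true ,false,true ,false,true ,false,true ,true ,false],
    ![true ,false,false,true ,false,true ,true ,true ,false],
    ![true ,true ,true ,false,false,true ,false,false,true ],
    ![true ,true ,false,false,true ,true ,false,false,true ],
    ![true ,false,false,false,true ,true ,true ,false,true ],
    ![false,false,true ,true ,true ,false,false,true ,true ],
    ![true ,true ,false,false,false,true ,false,true ,true ],
    ![true ,false,true ,false,false,true ,false,true ,true ],
    ![false,true ,true ,false,false,true ,false,true ,true ],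
    ![true ,true ,true ,false,false,true ,false,true ,true ],
    ![false,true ,false,false,true ,true ,false,true ,true ],
    ![true ,true ,false,false,true ,true ,false,true ,true ],
    ![false,true ,true ,false,false,false,true ,true ,true ],
    ![false,false,true ,false,true ,false,true ,true ,true ],
    ![false,false,false,true ,false,true ,true ,true ,true ],
    ![true ,false,false,true ,false,true ,true ,true ,true ]] k v

def GG : Fin 18 → Vt → Bool := fun k v => tblG k (enc v)

def cnt (m : Vt → Bool) : ℕ := (Finset.univ.filter (fun v => m v = true)).card

set_option maxRecDepth 100000 in
set_option maxHeartbeats 4000000 in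
lemma big_lemma : ∀ (m : Vt → Bool) (b : Bool), Qb m b → 5 ≤ cnt m →
    m = GG 0 ∨ m = GG 1 ∨ m = GG 2 ∨ m = GG 3 ∨ m = GG 4 ∨ m = GG 5 ∨ m = GG 6 ∨ m = GG 7 ∨ m = GG 8 ∨ m = GG 9 ∨ m = GG 10 ∨ m = GG 11 ∨ m = GG 12 ∨ m = GG 13 ∨ m = GG 14 ∨ m = GG 15 ∨ m = GG 16 ∨ m = GG 17 := by decide

set_option maxRecDepth 100000 in
set_option maxHeartbeats 4000000 in
lemma small_lemma : ∀ (m : Vt → Bool) (b : Bool), Qb m b →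
    ∀ k : Fin 18, ∃ v, GG k v = false ∧ m v = false := by decide

lemma final (m₁ m₂ : Vt → Bool) (b₁ b₂ : Bool) (q1 : Qb m₁ b₁) (q2 : Qb m₂ b₂)
    (hb : 5 ≤ cnt m₁) (cov : ∀ v, m₁ v = true ∨ m₂ v = true) : False := by
  rcases big_lemma m₁ b₁ q1 hb with rfl|rfl|rfl|rfl|rfl|rfl|rfl|rfl|rfl|rfl|rfl|rfl|rfl|rfl|rfl|rfl|rfl|rfl
  · obtain ⟨v, hv1, hv2⟩ := small_lemma m₂ b₂ q2 0
    rcases cov v with h | h <;> simp_all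
  · obtain ⟨v, hv1, hv2⟩ := small_lemma m₂ b₂ q2 1
    rcases cov v with h | h <;> simp_all
  · obtain ⟨v, hv1, hv2⟩ := small_lemma m₂ b₂ q2 2
    rcases cov v with h | h <;> simp_all
  · obtain ⟨v, hv1, hv2⟩ := small_lemma m₂ b₂ q2 3
    rcases cov v with h | h <;> simp_all
  · obtain ⟨v, hv1, hv2⟩ := small_lemma m₂ b₂ q2 4
    rcases cov v with h | h <;> simp_all
  · obtain ⟨v, hv1, hv2⟩ := small_lemma m₂ b₂ q2 5
    rcases cov v with h | h <;> simp_all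
  · obtain ⟨v, hv1, hv2⟩ := small_lemma m₂ b₂ q2 6
    rcases cov v with h | h <;> simp_all
  · obtain ⟨v, hv1, hv2⟩ := small_lemma m₂ b₂ q2 7
    rcases cov v with h | h <;> simp_all
  · obtain ⟨v, hv1, hv2⟩ := small_lemma m₂ b₂ q2 8
    rcases cov v with h | h <;> simp_all
  · obtain ⟨v, hv1, hv2⟩ := small_lemma m₂ b₂ q2 9
    rcases cov v with h | h <;> simp_all
  · obtain ⟨v, hv1, hv2⟩ := small_lemma m₂ b₂ q2 10
    rcases cov v with h | h <;> simp_all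
  · obtain ⟨v, hv1, hv2⟩ := small_lemma m₂ b₂ q2 11
    rcases cov v with h | h <;> simp_all
  · obtain ⟨v, hv1, hv2⟩ := small_lemma m₂ b₂ q2 12
    rcases cov v with h | h <;> simp_all
  · obtain ⟨v, hv1, hv2⟩ := small_lemma m₂ b₂ q2 13
    rcases cov v with h | h <;> simp_all
  · obtain ⟨v, hv1, hv2⟩ := small_lemma m₂ b₂ q2 14
    rcases cov v with h | h <;> simp_all
  · obtain ⟨v, hv1, hv2⟩ := small_lemma m₂ b₂ q2 15
    rcases cov v with h | h <;> simp_all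
  · obtain ⟨v, hv1, hv2⟩ := small_lemma m₂ b₂ q2 16
    rcases cov v with h | h <;> simp_all
  · obtain ⟨v, hv1, hv2⟩ := small_lemma m₂ b₂ q2 17
    rcases cov v with h | h <;> simp_all


lemma part2 : ¬ HasMonoCover Gt col2 2 := by
  classical
  rintro ⟨S₁, S₂, b₁, b₂, hc1, hd1, hc2, hd2, hcov⟩
  have q1 := bridge S₁ b₁ hc1 hd1
  have q2 := bridge S₂ b₂ hc2 hd2
  have cov : ∀ v, (fun v => decide (v ∈ S₁)) v = true ∨ (fun v => decide (v ∈ S₂)) v = true := by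
    intro v
    have hv : v ∈ S₁ ∪ S₂ := hcov ▸ Set.mem_univ v
    rcases hv with h | h
    · exact Or.inl (decide_eq_true h)
    · exact Or.inr (decide_eq_true h)
  have h9 : (Finset.univ : Finset Vt).card = 9 := by decide
  have hsub : (Finset.univ : Finset Vt) ⊆
      Finset.univ.filter (fun v => decide (v ∈ S₁) = true) ∪
      Finset.univ.filter (fun v => decide (v ∈ S₂) = true) := by
    intro v _
    rcases cov v with h | h <;> simp_all
  have hcard : 9 ≤ cnt (fun v => decide (v ∈ S₁)) + cnt (fun v => decide (v ∈ S₂)) := by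
    have h1 := Finset.card_le_card hsub
    have h2 := Finset.card_union_le
      (Finset.univ.filter (fun v => decide (v ∈ S₁) = true))
      (Finset.univ.filter (fun v => decide (v ∈ S₂) = true))
    have h3 : cnt (fun v => decide (v ∈ S₁)) =
        (Finset.univ.filter (fun v => decide (v ∈ S₁) = true)).card := rfl
    have h4 : cnt (fun v => decide (v ∈ S₂)) =
        (Finset.univ.filter (fun v => decide (v ∈ S₂) = true)).card := rfl
    omega
  rcases (by omega : 5 ≤ cnt (fun v => decide (v ∈ S₁)) ∨ 5 ≤ cnt (fun v => decide (v ∈ S₂)))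
    with h | h
  · exact final _ _ b₁ b₂ q1 q2 h cov
  · exact final _ _ b₂ b₁ q2 q1 h (fun v => (cov v).symm)

theorem stmt4 :
    (∀ col : Sym2 (Σ i : Fin 3, Fin (![4, 3, 2] i)) → Bool,
      HasMonoCover (completeMultipartiteGraph (fun i : Fin 3 => Fin (![4, 3, 2] i))) col 3) ∧
    (∃ col : Sym2 (Σ i : Fin 3, Fin (![4, 3, 2] i)) → Bool,
      ¬ HasMonoCover (completeMultipartiteGraph (fun i : Fin 3 => Fin (![4, 3, 2] i))) col 2) := by
  exact ⟨part1, col2, part2⟩
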